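/- For every n ∈ ℕ, the matrix D = [[n,1,1],[1,1,0],[1,0,0]] satisfies |det(D−E)·det(B_D−E)| = 2n−1, and the matrix F = [[n+1,1,1],[2,1,0],[1,0,0]] satisfies |det(F−E)·det(B_F−E)| = 4n, where B_M denotes the associated minor matrix of M. -/

import Mathlib

/-- The `(i,j)` minor of a `3×3` matrix: the determinant of the `2×2` matrix
obtained by deleting row `i` and column `j`. -/
def minor3 (A : Matrix (Fin 3) (Fin 3) ℤ) (i j : Fin 3) : ℤ :=
  (A.submatrix i.succAbove j.succAbove).det

/-- The associated matrix of minors `B_A = [[M₃₃,M₃₂,M₃₁],[M₂₃,M₂₂,M₂₁],[M₁₃,M₁₂,M₁₁]]`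
(indices here are 0-based: `M₃₃ = minor3 A 2 2`, etc.). -/
def minorMatrix (A : Matrix (Fin 3) (Fin 3) ℤ) : Matrix (Fin 3) (Fin 3) ℤ :=
  !![minor3 A 2 2, minor3 A 2 1, minor3 A 2 0;
     minor3 A 1 2, minor3 A 1 1, minor3 A 1 0;
     minor3 A 0 2, minor3 A 0 1, minor3 A 0 0]


lemma minor3_eq (A : Matrix (Fin 3) (Fin 3) ℤ) (i j : Fin 3) :
    minor3 A i j = A (i.succAbove 0) (j.succAbove 0) * A (i.succAbove 1) (j.succAbove 1)
      - A (i.succAbove 0) (j.succAbove 1) * A (i.succAbove 1) (j.succAbove 0) := by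
  rw [minor3, Matrix.det_fin_two]; rfl

lemma minorMatrix_D (n : ℤ) :
    minorMatrix !![(n : ℤ), 1, 1; 1, 1, 0; 1, 0, 0] = !![n-1,-1,-1;-1,-1,0;-1,0,0] := by
  simp only [minorMatrix, minor3_eq, show ((2:Fin 3).succAbove 0 = 0) from rfl,
    show ((2:Fin 3).succAbove 1 = 1) from rfl, show ((1:Fin 3).succAbove 0 = 0) from rfl,
    show ((1:Fin 3).succAbove 1 = 2) from rfl, show ((0:Fin 3).succAbove 0 = 1) from rfl,
    show ((0:Fin 3).succAbove 1 = 2) from rfl]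
  norm_num [Matrix.cons_val_two, Matrix.vecHead, Matrix.vecTail, Function.comp]

lemma minorMatrix_F (n : ℤ) :
    minorMatrix !![(n : ℤ) + 1, 1, 1; 2, 1, 0; 1, 0, 0] = !![n-1,-2,-1;-1,-1,0;-1,0,0] := by
  simp only [minorMatrix, minor3_eq, show ((2:Fin 3).succAbove 0 = 0) from rfl,
    show ((2:Fin 3).succAbove 1 = 1) from rfl, show ((1:Fin 3).succAbove 0 = 0) from rfl,
    show ((1:Fin 3).succAbove 1 = 2) from rfl, show ((0:Fin 3).succAbove 0 = 1) from rfl,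
    show ((0:Fin 3).succAbove 1 = 2) from rfl]
  norm_num [Matrix.cons_val_two, Matrix.vecHead, Matrix.vecTail, Function.comp]
  ring_nf

/-- For every `n ∈ ℕ` (positive), the matrix `D = [[n,1,1],[1,1,0],[1,0,0]]`
satisfies `|det(D - E) * det(B_D - E)| = 2n - 1`, and the matrix
`F = [[n+1,1,1],[2,1,0],[1,0,0]]` satisfies `|det(F - E) * det(B_F - E)| = 4n`,
where `B_M` denotes the associated matrix of minors of `M`. -/
theorem odd_and_multiples_of_four_realized (n : ℕ) (hn : 1 ≤ n) :
    ((((!![(n : ℤ), 1, 1; 1, 1, 0; 1, 0, 0]) - 1).det *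
        ((minorMatrix (!![(n : ℤ), 1, 1; 1, 1, 0; 1, 0, 0])) - 1).det).natAbs = 2 * n - 1) ∧
      ((((!![(n : ℤ) + 1, 1, 1; 2, 1, 0; 1, 0, 0]) - 1).det *
        ((minorMatrix (!![(n : ℤ) + 1, 1, 1; 2, 1, 0; 1, 0, 0])) - 1).det).natAbs = 4 * n) := by

  rw [minorMatrix_D, minorMatrix_F]
  have h1 : ((!![(n : ℤ), 1, 1; 1, 1, 0; 1, 0, 0]) - 1).det = 1 := by
    rw [show ((!![(n : ℤ), 1, 1; 1, 1, 0; 1, 0, 0]) - 1) = !![(n:ℤ)-1,1,1;1,0,0;1,0,-1] by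
      rw [Matrix.one_fin_three]; norm_num [Matrix.cons_val_two, Matrix.vecHead, Matrix.vecTail, Function.comp]]
    rw [Matrix.det_fin_three]
    norm_num [Matrix.cons_val_two, Matrix.vecHead, Matrix.vecTail]
  have h2 : ((!![(n:ℤ)-1,-1,-1;-1,-1,0;-1,0,0]) - 1).det = 2 * (n:ℤ) - 1 := by
    rw [show ((!![(n:ℤ)-1,-1,-1;-1,-1,0;-1,0,0]) - 1) = !![(n:ℤ)-1-1,-1,-1;-1,-2,0;-1,0,-1] by
      rw [Matrix.one_fin_three]; norm_num [Matrix.cons_val_two, Matrix.vecHead, Matrix.vecTail, Function.comp]]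
    rw [Matrix.det_fin_three]
    norm_num [Matrix.cons_val_two, Matrix.vecHead, Matrix.vecTail]; ring
  have h3 : ((!![(n : ℤ) + 1, 1, 1; 2, 1, 0; 1, 0, 0]) - 1).det = 2 := by
    rw [show ((!![(n : ℤ) + 1, 1, 1; 2, 1, 0; 1, 0, 0]) - 1) = !![(n:ℤ),1,1;2,0,0;1,0,-1] by
      rw [Matrix.one_fin_three]; norm_num [Matrix.cons_val_two, Matrix.vecHead, Matrix.vecTail, Function.comp]]
    rw [Matrix.det_fin_three]
    norm_num [Matrix.cons_val_two, Matrix.vecHead, Matrix.vecTail]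
  have h4 : ((!![(n:ℤ)-1,-2,-1;-1,-1,0;-1,0,0]) - 1).det = 2 * (n:ℤ) := by
    rw [show ((!![(n:ℤ)-1,-2,-1;-1,-1,0;-1,0,0]) - 1) = !![(n:ℤ)-1-1,-2,-1;-1,-2,0;-1,0,-1] by
      rw [Matrix.one_fin_three]; norm_num [Matrix.cons_val_two, Matrix.vecHead, Matrix.vecTail, Function.comp]]
    rw [Matrix.det_fin_three]
    norm_num [Matrix.cons_val_two, Matrix.vecHead, Matrix.vecTail]; ring
  rw [h1, h2, h3, h4]
  constructor <;> omega
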